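/- arXiv:2306.16334 — 2 statements merged into one kernel-verified Lean document; each statement's English description precedes it below -/
import Mathlib

section
/- Non-removable discontinuity preservation theorem: Let 𝒵 and 𝒵' be open subsets of ℝ^d, let h : 𝒵 → 𝒵' be a smooth diffeomorphism, and let μ be a probability measure on ℝ^d with μ(ℝ^d \ 𝒵) = 0 that is absolutely continuous with respect to Lebesgue measure. Let ν be the pushforward of μ under h (the image measure of μ restricted to 𝒵). Then for every z' ∈ 𝒵', ν has a non-removable discontinuity at z' if and only if μ has a non-removable discontinuity at h⁻¹(z'). -/
open Set MeasureTheory Topology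

noncomputable section

abbrev Euc (d : ℕ) := EuclideanSpace ℝ (Fin d)

/-- Axis separator: points of `S` whose `i`-th coordinate equals `τ`. -/
def Gamma {d : ℕ} (S : Set (Euc d)) (i : Fin d) (τ : ℝ) : Set (Euc d) :=
  {z | z ∈ S ∧ z i = τ}

/-- Positive half: points of `S` whose `i`-th coordinate is greater than `τ`. -/
def GammaPos {d : ℕ} (S : Set (Euc d)) (i : Fin d) (τ : ℝ) : Set (Euc d) :=
  {z | z ∈ S ∧ τ < z i}

/-- Negative half: points of `S` whose `i`-th coordinate is less than `τ`. -/
def GammaNeg {d : ℕ} (S : Set (Euc d)) (i : Fin d) (τ : ℝ) : Set (Euc d) :=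
  {z | z ∈ S ∧ z i < τ}

/-- `Γ_S(i,τ)` is an axis-separator of `S`: it is nonempty and connected, and both of
its halves are nonempty and connected. (`IsConnected` includes nonemptiness.) -/
def IsAxisSeparator {d : ℕ} (S : Set (Euc d)) (i : Fin d) (τ : ℝ) : Prop :=
  IsConnected (Gamma S i τ) ∧ IsConnected (GammaPos S i τ) ∧ IsConnected (GammaNeg S i τ)

/-- A smooth diffeomorphism from `S` onto `S'` with explicit inverse `hinv`. -/
structure IsSmoothDiffeoOn {d : ℕ} (h hinv : Euc d → Euc d) (S S' : Set (Euc d)) : Prop where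
  mapsTo : Set.MapsTo h S S'
  mapsTo_inv : Set.MapsTo hinv S' S
  left_inv : ∀ z ∈ S, hinv (h z) = z
  right_inv : ∀ z' ∈ S', h (hinv z') = z'
  smooth : ContDiffOn ℝ (⊤ : ℕ∞) h S
  smooth_inv : ContDiffOn ℝ (⊤ : ℕ∞) hinv S'

/-- A discrete coordination on `S`: for each axis `i`, a strictly increasing nonempty tuple
of thresholds, each giving an axis-separator of `S`. -/
structure DiscreteCoordination {d : ℕ} (S : Set (Euc d)) where
  n : Fin d → ℕ
  n_pos : ∀ i, 0 < n i
  A : (i : Fin d) → Fin (n i) → ℝ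
  mono : ∀ i, StrictMono (A i)
  sep : ∀ i k, IsAxisSeparator S i (A i k)

/-- The grid of a discrete coordination: the union of all its axis-separators. -/
def DiscreteCoordination.grid {d : ℕ} {S : Set (Euc d)} (C : DiscreteCoordination S) :
    Set (Euc d) :=
  ⋃ (i : Fin d), ⋃ (k : Fin (C.n i)), Gamma S i (C.A i k)

/-- The parallel-separator-set along axis `i`. -/
def DiscreteCoordination.axisSet {d : ℕ} {S : Set (Euc d)} (C : DiscreteCoordination S)
    (i : Fin d) : Set (Set (Euc d)) :=
  {H | ∃ k : Fin (C.n i), H = Gamma S i (C.A i k)}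

/-- The axis-separator set of a discrete coordination. -/
def DiscreteCoordination.sepSet {d : ℕ} {S : Set (Euc d)} (C : DiscreteCoordination S) :
    Set (Set (Euc d)) :=
  {H | ∃ (i : Fin d) (k : Fin (C.n i)), H = Gamma S i (C.A i k)}

/-- A backbone: a choice of one separator per axis such that they all meet in a single
point and each of them meets every separator of the grid lying on a different axis. -/
def DiscreteCoordination.HasBackbone {d : ℕ} {S : Set (Euc d)}
    (C : DiscreteCoordination S) : Prop :=
  ∃ kstar : (i : Fin d) → Fin (C.n i),
    (∃ z : Euc d, (⋂ (i : Fin d), Gamma S i (C.A i (kstar i))) = {z}) ∧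
    ∀ (i j : Fin d), j ≠ i → ∀ k : Fin (C.n j),
      (Gamma S i (C.A i (kstar i)) ∩ Gamma S j (C.A j k)).Nonempty

/-- Quantization: `Q(x;T) = Σ_k 1[x ≥ T_k]`. -/
def Q {K : ℕ} (x : ℝ) (T : Fin K → ℝ) : ℕ :=
  (Finset.univ.filter fun k : Fin K => T k ≤ x).card

/-- Quantization with order reversal: `Q⁻(x;T) = Σ_k 1[x ≤ T_k]`. -/
def Qneg {K : ℕ} (x : ℝ) (T : Fin K → ℝ) : ℕ :=
  (Finset.univ.filter fun k : Fin K => x ≤ T k).card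

/-- Signed quantization: `Q^{+1} = Q` and `Q^{-1} = Q⁻`. -/
def Qsgn {K : ℕ} (s : ℤ) (x : ℝ) (T : Fin K → ℝ) : ℕ :=
  if s = 1 then Q x T else Qneg x T

/-- `μ` (absolutely continuous w.r.t. Lebesgue) has a non-removable discontinuity at `z`
if every measurable density of `μ` w.r.t. Lebesgue measure is discontinuous at `z`. -/
def HasNonRemovableDiscont {d : ℕ} (μ : Measure (Euc d)) (z : Euc d) : Prop :=
  ∀ q : Euc d → ENNReal, Measurable q → μ = volume.withDensity q → ¬ ContinuousAt q z

/-- `T` has exactly two connected components, namely `Cp` and `Cm`. -/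
def TwoComponents {d : ℕ} (T Cp Cm : Set (Euc d)) : Prop :=
  Cp ≠ Cm ∧
  (∃ x ∈ T, connectedComponentIn T x = Cp) ∧
  (∃ x ∈ T, connectedComponentIn T x = Cm) ∧
  ∀ x ∈ T, connectedComponentIn T x = Cp ∨ connectedComponentIn T x = Cm

/-- The intersection set of a finite family of separators: points lying on at least two
distinct members. -/
def interSet {d M : ℕ} (H : Fin M → Set (Euc d)) : Set (Euc d) :=
  ⋃ (m : Fin M), ⋃ (m' : Fin M), ⋃ (_ : m ≠ m'), H m ∩ H m'

lemma measurableSet_preimage_inter {d : ℕ} {f : Euc d → Euc d} {S A : Set (Euc d)}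
    (hS : MeasurableSet S) (hf : ContinuousOn f S) (hA : MeasurableSet A) :
    MeasurableSet (f ⁻¹' A ∩ S) := by
  have he : f ⁻¹' A ∩ S = Subtype.val '' (S.restrict f ⁻¹' A) := by
    ext x
    simp only [Set.mem_inter_iff, Set.mem_preimage, Set.mem_image, Set.restrict_apply,
      Subtype.exists, exists_and_right, exists_eq_right]
    tauto
  rw [he]
  exact (MeasurableEmbedding.subtype_coe hS).measurableSet_image.2
    ((continuousOn_iff_continuous_restrict.mp hf).measurable hA)

lemma IsSmoothDiffeoOn.flip {d : ℕ} {h hinv : Euc d → Euc d} {S S' : Set (Euc d)}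
    (hd : IsSmoothDiffeoOn h hinv S S') : IsSmoothDiffeoOn hinv h S' S :=
  ⟨hd.mapsTo_inv, hd.mapsTo, hd.right_inv, hd.left_inv, hd.smooth_inv, hd.smooth⟩

lemma transport_density {d : ℕ} {S S' : Set (Euc d)} (hS : IsOpen S) (hS' : IsOpen S')
    {f g : Euc d → Euc d} (hdiff : IsSmoothDiffeoOn f g S S')
    (σ : Measure (Euc d)) {q : Euc d → ENNReal} (hqm : Measurable q)
    (hq : σ = volume.withDensity q) {w : Euc d} (hw : w ∈ S')
    (hc : ContinuousAt q (g w)) :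
    ∃ q' : Euc d → ENNReal, Measurable q' ∧
      Measure.map f (σ.restrict S) = volume.withDensity q' ∧ ContinuousAt q' w := by
  have hfc : ContinuousOn f S := hdiff.smooth.continuousOn
  have hgc : ContinuousOn g S' := hdiff.smooth_inv.continuousOn
  have hfd : ∀ x ∈ S, DifferentiableAt ℝ f x := fun x hx =>
    (hdiff.smooth.contDiffAt (hS.mem_nhds hx)).differentiableAt (by simp)
  have hgd : ∀ y ∈ S', DifferentiableAt ℝ g y := fun y hy =>
    (hdiff.smooth_inv.contDiffAt (hS'.mem_nhds hy)).differentiableAt (by simp)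
  have hchain : ∀ x ∈ S, (fderiv ℝ g (f x)).det * (fderiv ℝ f x).det = 1 := by
    intro x hx
    have hfx : f x ∈ S' := hdiff.mapsTo hx
    have hev : (g ∘ f) =ᶠ[𝓝 x] id := by
      filter_upwards [hS.mem_nhds hx] with y hy
      exact hdiff.left_inv y hy
    have h1 : fderiv ℝ (g ∘ f) x = fderiv ℝ (id : Euc d → Euc d) x := hev.fderiv_eq
    rw [fderiv_comp x (hgd _ hfx) (hfd _ hx), fderiv_id] at h1
    have h2 : ((fderiv ℝ g (f x)).comp (fderiv ℝ f x)).det = 1 := by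
      rw [h1]; simp [ContinuousLinearMap.det]
    rwa [ContinuousLinearMap.det, ContinuousLinearMap.toLinearMap_comp, LinearMap.det_comp] at h2
  set D : Euc d → ENNReal := fun y => ENNReal.ofReal |(fderiv ℝ g y).det| with hD
  set F : Euc d → ENNReal := fun y => q (g y) * D y with hF
  refine ⟨S'.indicator F, ?_, ?_, ?_⟩
  · have hDcont : ContinuousOn D S' := by
      have h1 : ContinuousOn (fderiv ℝ g) S' :=
        hdiff.smooth_inv.continuousOn_fderiv_of_isOpen hS' (by exact_mod_cast le_top)
      exact (ENNReal.continuous_ofReal.comp (_root_.continuous_abs.comp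
        ContinuousLinearMap.continuous_det)).comp_continuousOn h1
    have hFr : Measurable (S'.restrict F) := by
      have h1 : Measurable (S'.restrict g) :=
        (continuousOn_iff_continuous_restrict.mp hgc).measurable
      have h2 : Measurable (S'.restrict D) :=
        (continuousOn_iff_continuous_restrict.mp hDcont).measurable
      exact (hqm.comp h1).mul h2
    refine measurable_of_restrict_of_restrict_compl hS'.measurableSet ?_ ?_
    · have : S'.restrict (S'.indicator F) = S'.restrict F := by
        funext y; exact Set.indicator_of_mem y.2 F
      change Measurable (S'.restrict (S'.indicator F)); rw [this]; exact hFr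
    · have : S'ᶜ.restrict (S'.indicator F) = fun _ => 0 := by
        funext y; exact Set.indicator_of_notMem y.2 F
      change Measurable (S'ᶜ.restrict (S'.indicator F)); rw [this]; exact measurable_const
  · refine Measure.ext fun A hA => ?_
    have hfae : AEMeasurable f (σ.restrict S) := hfc.aemeasurable hS.measurableSet
    have hsm : MeasurableSet (f ⁻¹' A ∩ S) :=
      measurableSet_preimage_inter hS.measurableSet hfc hA
    rw [Measure.map_apply_of_aemeasurable hfae hA, Measure.restrict_apply' hS.measurableSet,
      hq, withDensity_apply _ hsm, withDensity_apply _ hA]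
    have hder : ∀ x ∈ f ⁻¹' A ∩ S, HasFDerivWithinAt f (fderiv ℝ f x) (f ⁻¹' A ∩ S) x :=
      fun x hx => ((hfd x hx.2).hasFDerivAt).hasFDerivWithinAt
    have hinj : Set.InjOn f (f ⁻¹' A ∩ S) := by
      intro a ha b hb hab
      have := congrArg g hab
      rwa [hdiff.left_inv a ha.2, hdiff.left_inv b hb.2] at this
    have himg : f '' (f ⁻¹' A ∩ S) = A ∩ S' := by
      ext y; constructor
      · rintro ⟨x, ⟨hxA, hxS⟩, rfl⟩
        exact ⟨hxA, hdiff.mapsTo hxS⟩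
      · rintro ⟨hyA, hyS'⟩
        refine ⟨g y, ⟨?_, hdiff.mapsTo_inv hyS'⟩, hdiff.right_inv y hyS'⟩
        simpa [hdiff.right_inv y hyS'] using hyA
    have hcov := lintegral_image_eq_lintegral_abs_det_fderiv_mul volume hsm hder hinj
      (S'.indicator F)
    rw [himg] at hcov
    have hpt : ∫⁻ x in f ⁻¹' A ∩ S,
        ENNReal.ofReal |(fderiv ℝ f x).det| * S'.indicator F (f x) = ∫⁻ x in f ⁻¹' A ∩ S, q x := by
      refine setLIntegral_congr_fun hsm (fun x hx => ?_)
      have hxS : x ∈ S := hx.2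
      have hfx : f x ∈ S' := hdiff.mapsTo hxS
      rw [Set.indicator_of_mem hfx, hF]
      simp only [hD, hdiff.left_inv x hxS]
      rw [← mul_assoc, mul_comm (ENNReal.ofReal _) (q x), mul_assoc,
        ← ENNReal.ofReal_mul (abs_nonneg _), ← abs_mul, mul_comm ((fderiv ℝ f x).det),
        hchain x hxS]
      simp
    rw [hpt] at hcov
    rw [← hcov]
    have hr : ∫⁻ a in A, S'.indicator F a = ∫⁻ a in A ∩ S', F a := by
      rw [lintegral_indicator hS'.measurableSet F, Measure.restrict_restrict hS'.measurableSet,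
        Set.inter_comm S' A]
    rw [hr]
    refine setLIntegral_congr_fun (hA.inter hS'.measurableSet)
      (fun x hx => ?_)
    exact Set.indicator_of_mem hx.2 F
  · have hgw : g w ∈ S := hdiff.mapsTo_inv hw
    have hdetw : (fderiv ℝ g w).det ≠ 0 := by
      have := hchain (g w) hgw
      rw [hdiff.right_inv w hw] at this
      intro h0; rw [h0, zero_mul] at this; exact zero_ne_one this
    have hDcont : ContinuousAt D w := by
      have h1 : ContinuousOn (fderiv ℝ g) S' :=
        hdiff.smooth_inv.continuousOn_fderiv_of_isOpen hS' (by exact_mod_cast le_top)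
      exact (ENNReal.continuous_ofReal.comp (_root_.continuous_abs.comp
        ContinuousLinearMap.continuous_det)).continuousAt.comp
        (h1.continuousAt (hS'.mem_nhds hw))
    have hqg : ContinuousAt (fun y => q (g y)) w :=
      hc.comp (hgc.continuousAt (hS'.mem_nhds hw))
    have hFcont : ContinuousAt F w := by
      have hD0 : D w ≠ 0 := by
        simp only [hD, ne_eq, ENNReal.ofReal_eq_zero, not_le]
        exact abs_pos.mpr hdetw
      have hDtop : D w ≠ ⊤ := ENNReal.ofReal_ne_top
      exact ENNReal.Tendsto.mul hqg (Or.inr hDtop) hDcont (Or.inl hD0)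
    refine hFcont.congr ?_
    filter_upwards [hS'.mem_nhds hw] with y hy
    exact (Set.indicator_of_mem hy F).symm

/-- **Non-removable discontinuity preservation theorem.** -/
theorem nonremovable_discontinuity_preservation
    {d : ℕ} {Z Z' : Set (Euc d)} (hZ : IsOpen Z) (hZ' : IsOpen Z')
    {h hinv : Euc d → Euc d} (hdiff : IsSmoothDiffeoOn h hinv Z Z')
    (μ : Measure (Euc d)) [IsProbabilityMeasure μ]
    (hμZ : μ (Set.univ \ Z) = 0) (hac : μ ≪ volume)
    (ν : Measure (Euc d)) (hν : ν = Measure.map h (μ.restrict Z)) :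
    ∀ z' ∈ Z', (HasNonRemovableDiscont ν z' ↔ HasNonRemovableDiscont μ (hinv z')) := by
  intro z' hz'
  have hZm := hZ.measurableSet
  have hZ'm := hZ'.measurableSet
  have hμres : μ.restrict Z = μ := by
    refine Measure.restrict_eq_self_of_ae_mem ?_
    rw [ae_iff]
    have he : {a | a ∉ Z} = Set.univ \ Z := by ext x; simp
    rw [he]; exact hμZ
  have hhae : AEMeasurable h (μ.restrict Z) := hdiff.smooth.continuousOn.aemeasurable hZm
  have hνc : ν Z'ᶜ = 0 := by
    rw [hν, Measure.map_apply_of_aemeasurable hhae hZ'm.compl,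
      Measure.restrict_apply' hZm]
    have he : h ⁻¹' Z'ᶜ ∩ Z = ∅ := by
      ext x
      simp only [Set.mem_inter_iff, Set.mem_preimage, Set.mem_compl_iff,
        Set.mem_empty_iff_false, iff_false, not_and]
      exact fun hx1 hx2 => hx1 (hdiff.mapsTo hx2)
    rw [he]; exact measure_empty
  have hνres : ν.restrict Z' = ν := by
    refine Measure.restrict_eq_self_of_ae_mem ?_
    rw [ae_iff]; exact hνc
  have hback : Measure.map hinv (ν.restrict Z') = μ := by
    have hginv_ae : AEMeasurable hinv ((μ.restrict Z).map h) := by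
      rw [← hν, ← hνres]
      exact hdiff.smooth_inv.continuousOn.aemeasurable hZ'm
    rw [hνres, hν, AEMeasurable.map_map_of_aemeasurable hginv_ae hhae]
    have hid : hinv ∘ h =ᵐ[μ.restrict Z] id := by
      filter_upwards [ae_restrict_mem hZm] with x hx
      exact hdiff.left_inv x hx
    rw [Measure.map_congr hid, Measure.map_id, hμres]
  constructor
  · intro Hν q hqm hq hcont
    obtain ⟨q', hm', hd', hc'⟩ := transport_density hZ hZ' hdiff μ hqm hq hz' hcont
    exact Hν q' hm' (by rw [hν, ← hμres] at *; exact hd') hc'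
  · intro Hμ q' hm' hd' hc'
    have hw : hinv z' ∈ Z := hdiff.mapsTo_inv hz'
    have hcq' : ContinuousAt q' (h (hinv z')) := by rwa [hdiff.right_inv z' hz']
    obtain ⟨q, hqm, hd, hc⟩ := transport_density hZ' hZ hdiff.flip ν hm' hd' hw hcq'
    exact Hμ q hqm (by rw [← hback, hd]) hc
end
end

section
/- Recovery of quantized factors (Corollary): Let S and S' be open connected subsets of ℝ^d and h : S → S' a smooth diffeomorphism. Let A be a discrete coordination on S whose axis-separator set 𝒢(A) has a backbone, let B be a discrete coordination on S', and suppose h(grid_S(A)) = grid_{S'}(B). Then there exist a permutation σ of {1,…,d} and a sign vector s ∈ {−1,+1}^d such that for every i ∈ {1,…,d}, with j = σ(i), and every z ∈ S: Q(z_i; A_i) = Q^{s_i}((h z)_j; B_j). -/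
open Set MeasureTheory Topology

noncomputable section

lemma gamma_subset_gamma {d : ℕ} {S : Set (Euc d)} (hS : IsOpen S) {i i' : Fin d} {τ τ' : ℝ}
    (hne : (Gamma S i τ).Nonempty) (hsub : Gamma S i τ ⊆ Gamma S i' τ') :
    i' = i ∧ τ' = τ := by
  obtain ⟨w, hw⟩ := hne
  by_cases hii : i' = i
  · subst hii
    exact ⟨rfl, by rw [← (hsub hw).2, hw.2]⟩
  · exfalso
    obtain ⟨ε, hε, hball⟩ := Metric.isOpen_iff.mp hS w hw.1
    set w' : Euc d := w + (ε/2) • EuclideanSpace.single i' (1:ℝ) with hw'def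
    have hdist : dist w' w = ε/2 := by
      have h1 : w' - w = (ε/2) • EuclideanSpace.single i' (1:ℝ) := by
        rw [hw'def]; abel
      rw [dist_eq_norm, h1, norm_smul, EuclideanSpace.norm_single]
      rw [Real.norm_eq_abs, Real.norm_eq_abs, abs_of_pos (by linarith : (0:ℝ) < ε/2),
        abs_of_pos one_pos, mul_one]
    have hw'S : w' ∈ S := hball (by rw [Metric.mem_ball, hdist]; linarith)
    have h1 : w' i = w i := by
      show w i + (ε/2) * (EuclideanSpace.single i' (1:ℝ)) i = w i
      rw [EuclideanSpace.single_apply, if_neg (fun e => hii e.symm)]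
      ring
    have h2 : w' i' = w i' + ε/2 := by
      show w i' + (ε/2) * (EuclideanSpace.single i' (1:ℝ)) i' = w i' + ε/2
      rw [EuclideanSpace.single_apply, if_pos rfl]
      ring
    have hw'Γ : w' ∈ Gamma S i τ := ⟨hw'S, by rw [h1, hw.2]⟩
    have h3 := (hsub hw'Γ).2
    have h4 := (hsub hw).2
    rw [h2, h4] at h3
    linarith

set_option maxHeartbeats 1000000 in
lemma key_L1 {d : ℕ} {S S' : Set (Euc d)} (hS : IsOpen S) (hS' : IsOpen S')
    {h hinv : Euc d → Euc d} (hdiff : IsSmoothDiffeoOn h hinv S S')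
    {n' : Fin d → ℕ} {B : (j : Fin d) → Fin (n' j) → ℝ}
    (hBinj : ∀ j, Function.Injective (B j))
    {i : Fin d} {τ : ℝ} (hconn : IsConnected (Gamma S i τ))
    (himg : ∀ w ∈ Gamma S i τ, ∃ (j : Fin d) (l : Fin (n' j)), h w j = B j l) :
    ∃ (j : Fin d) (l : Fin (n' j)), ∀ w ∈ Gamma S i τ, h w j = B j l := by
  classical
  set G := Gamma S i τ with hGdef
  have hGS : G ⊆ S := fun w hw => hw.1
  set V : ((j : Fin d) × Fin (n' j)) → Set (Euc d) := fun b =>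
    {w | w ∈ G ∧ ∃ ε > 0, ∀ u : Euc d, u i = τ → dist u w < ε →
      u ∈ S ∧ h u b.1 = B b.1 b.2} with hVdef
  -- Step A: density of good points
  have hdense : ∀ w0 ∈ G, ∀ ε > 0, ∃ b w, w ∈ V b ∧ dist w w0 < ε := by
    intro w0 hw0 ε hε
    obtain ⟨r', hr', hball⟩ := Metric.isOpen_iff.mp hS w0 hw0.1
    set r : ℝ := min (r'/2) (ε/2) with hrdef
    have hr0 : 0 < r := lt_min (by linarith) (by linarith)
    have hrr' : r < r' := lt_of_le_of_lt (min_le_left _ _) (by linarith)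
    have hrS : Metric.closedBall w0 r ⊆ S :=
      (Metric.closedBall_subset_ball hrr').trans hball
    set X : Set (Euc d) := {u : Euc d | u i = τ} ∩ Metric.closedBall w0 r with hXdef
    have hXclosed : IsClosed X := by
      apply IsClosed.inter ?_ Metric.isClosed_closedBall
      exact isClosed_eq (EuclideanSpace.proj i).continuous continuous_const
    have hXS : X ⊆ S := fun u hu => hrS hu.2
    have hXG : X ⊆ G := fun u hu => ⟨hXS hu, hu.1⟩
    haveI : CompleteSpace X := hXclosed.completeSpace_coe
    haveI : Nonempty X := ⟨⟨w0, hw0.2, Metric.mem_closedBall_self hr0.le⟩⟩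
    set f : ((j : Fin d) × Fin (n' j)) → Set X :=
      fun b => {x : X | h (x : Euc d) b.1 = B b.1 b.2} with hfdef
    have hfclosed : ∀ b, IsClosed (f b) := by
      intro b
      have hc : Continuous fun x : X => h (x : Euc d) b.1 := by
        have hcS : ContinuousOn h S := hdiff.smooth.continuousOn
        have h1 : Continuous fun x : X => h (x : Euc d) :=
          hcS.comp_continuous continuous_subtype_val (fun x => hXS x.2)
        exact ((EuclideanSpace.proj b.1).continuous).comp h1
      exact isClosed_eq hc continuous_const
    have hfcover : (⋃ b, f b) = univ := by
      apply eq_univ_of_forall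
      intro x
      obtain ⟨j, l, hjl⟩ := himg x (hXG x.2)
      exact mem_iUnion.mpr ⟨⟨j, l⟩, hjl⟩
    obtain ⟨b, x1, hx1⟩ := nonempty_interior_of_iUnion_of_closed hfclosed hfcover
    obtain ⟨δ, hδ0, hδ⟩ := Metric.mem_nhds_iff.mp (mem_interior_iff_mem_nhds.mp hx1)
    have hw1P : (x1 : Euc d) i = τ := x1.2.1
    have hw1B : dist (x1 : Euc d) w0 ≤ r := Metric.mem_closedBall.mp x1.2.2
    set w1 : Euc d := (x1 : Euc d) with hw1def
    set t : ℝ := min δ r with htdef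
    have ht : 0 < t := lt_min hδ0 hr0
    have htr : t ≤ r := min_le_right _ _
    have htδ : t ≤ δ := min_le_left _ _
    set c : ℝ := t / (4*r) with hcdef
    have hc0 : 0 < c := by positivity
    have hc14 : c ≤ 1/4 := by
      rw [hcdef, div_le_iff₀ (by linarith : (0:ℝ) < 4*r)]
      linarith
    set w2 : Euc d := w1 + c • (w0 - w1) with hw2def
    have hw2P : w2 i = τ := by
      have e : w2 i = w1 i + c * (w0 i - w1 i) := rfl
      rw [e, hw1P, hw0.2]; ring
    have hd21 : dist w2 w1 ≤ t/4 := by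
      have e : w2 - w1 = c • (w0 - w1) := by rw [hw2def]; abel
      rw [dist_eq_norm, e, norm_smul, Real.norm_eq_abs, abs_of_pos hc0]
      have h1 : ‖w0 - w1‖ ≤ r := by
        rw [← dist_eq_norm, dist_comm]; exact hw1B
      calc c * ‖w0 - w1‖ ≤ c * r := by nlinarith
        _ = t/4 := by rw [hcdef]; field_simp
    have hd20 : dist w2 w0 ≤ r - t/4 := by
      have e : w2 - w0 = (1-c) • (w1 - w0) := by
        rw [hw2def, sub_smul, one_smul, smul_sub, smul_sub]; abel
      rw [dist_eq_norm, e, norm_smul, Real.norm_eq_abs, abs_of_nonneg (by linarith : (0:ℝ) ≤ 1 - c)]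
      have h1 : ‖w1 - w0‖ ≤ r := by rw [← dist_eq_norm]; exact hw1B
      have h2 : c * r = t/4 := by rw [hcdef]; field_simp
      nlinarith
    have hd20r : dist w2 w0 < r := lt_of_le_of_lt hd20 (by linarith)
    set ε' : ℝ := min (t/4) (r - dist w2 w0) with hε'def
    have hε'0 : 0 < ε' := lt_min (by linarith) (by linarith)
    have hgood : ∀ u : Euc d, u i = τ → dist u w2 < ε' → u ∈ S ∧ h u b.1 = B b.1 b.2 := by
      intro u hui hud
      have hud2 := lt_of_lt_of_le hud (min_le_right _ _)
      have hud1 := lt_of_lt_of_le hud (min_le_left _ _)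
      have hu0 : dist u w0 ≤ r := by
        calc dist u w0 ≤ dist u w2 + dist w2 w0 := dist_triangle _ _ _
          _ ≤ (r - dist w2 w0) + dist w2 w0 := by linarith
          _ = r := by ring
      have huX : u ∈ X := ⟨hui, Metric.mem_closedBall.mpr hu0⟩
      refine ⟨hXS huX, ?_⟩
      have hu1 : dist u w1 < δ := by
        calc dist u w1 ≤ dist u w2 + dist w2 w1 := dist_triangle _ _ _
          _ < t/4 + t/4 := by linarith
          _ = t/2 := by ring
          _ ≤ δ := by linarith
      have : (⟨u, huX⟩ : X) ∈ Metric.ball x1 δ := by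
        rw [Metric.mem_ball, Subtype.dist_eq]
        exact hu1
      exact hδ this
    have hw2X : w2 ∈ S := (hgood w2 hw2P (by rw [dist_self]; exact hε'0)).1
    refine ⟨b, w2, ⟨⟨hw2X, hw2P⟩, ε', hε'0, hgood⟩, ?_⟩
    calc dist w2 w0 < r := hd20r
      _ ≤ ε/2 := min_le_right _ _
      _ < ε := by linarith
  -- Step B1: value of h on closures of V b
  have hval : ∀ b, ∀ w, w ∈ closure (V b) → w ∈ S → h w b.1 = B b.1 b.2 := by
    intro b w hwc hwS
    obtain ⟨x, hxV, hxlim⟩ := mem_closure_iff_seq_limit.mp hwc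
    have hcont : ContinuousAt (fun u => h u b.1) w := by
      have h1 := hdiff.smooth.continuousOn.continuousAt (hS.mem_nhds hwS)
      exact ((EuclideanSpace.proj b.1).continuous.continuousAt).comp h1
    have hlim : Filter.Tendsto (fun n => h (x n) b.1) Filter.atTop (nhds (h w b.1)) :=
      hcont.tendsto.comp hxlim
    have hvals : (fun n => h (x n) b.1) = fun _ => B b.1 b.2 := by
      funext n
      obtain ⟨hmem, ε, hε, hu⟩ := hxV n
      exact (hu (x n) hmem.2 (by rw [dist_self]; exact hε)).2
    rw [hvals] at hlim
    exact tendsto_nhds_unique hlim tendsto_const_nhds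
  -- Step B2: derivative vanishing on V b
  have hderivV : ∀ b, ∀ u ∈ V b, ∀ v : Euc d, v i = 0 → fderiv ℝ h u v b.1 = 0 := by
    intro b u huV v hvi
    obtain ⟨huG, ε, hε, hall⟩ := huV
    have huS : u ∈ S := huG.1
    have hdiffat : DifferentiableAt ℝ h u :=
      (hdiff.smooth.differentiableOn (by simp)).differentiableAt
        (hS.mem_nhds huS)
    set cc : ℝ → Euc d := fun s => u + s • v with hccdef
    have hc : HasDerivAt cc v 0 := by
      have h1 : HasDerivAt (fun s : ℝ => s • v) ((1:ℝ) • v) 0 := (hasDerivAt_id 0).smul_const v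
      have h2 := h1.const_add u
      simpa [hccdef] using h2
    have hc0 : cc 0 = u := by simp [hccdef]
    have hcomp : HasDerivAt (fun s => h (cc s)) (fderiv ℝ h u v) 0 := by
      have h1 := hdiffat.hasFDerivAt
      rw [← hc0] at h1
      have h2 := h1.comp_hasDerivAt 0 hc
      rw [hc0] at h2
      exact h2
    have hproj : HasDerivAt (fun s => h (cc s) b.1) (fderiv ℝ h u v b.1) 0 := by
      have h2 := ((EuclideanSpace.proj (𝕜 := ℝ) b.1).hasFDerivAt
        (x := h (cc 0))).comp_hasDerivAt 0 hcomp
      exact h2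
    have hconst : (fun s => h (cc s) b.1) =ᶠ[nhds (0:ℝ)] fun _ => B b.1 b.2 := by
      have hball : Metric.ball (0:ℝ) (ε / (‖v‖ + 1)) ∈ nhds (0:ℝ) :=
        Metric.ball_mem_nhds _ (by positivity)
      refine Filter.eventually_of_mem hball ?_
      intro s hs
      have h1 : |s| < ε / (‖v‖+1) := by
        simpa [Real.dist_eq] using hs
      have hsv : dist (cc s) u < ε := by
        have h0 : dist (cc s) u = |s| * ‖v‖ := by
          rw [hccdef]
          simp [dist_eq_norm, add_sub_cancel_left, norm_smul, Real.norm_eq_abs]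
        rw [h0]
        have h2 : |s| * (‖v‖+1) < ε := by
          rw [← lt_div_iff₀ (by positivity : (0:ℝ) < ‖v‖+1)]
          exact h1
        nlinarith [abs_nonneg s, norm_nonneg v]
      have hci : cc s i = τ := by
        have e : cc s i = u i + s * v i := rfl
        rw [e, hvi, huG.2]; ring
      exact (hall (cc s) hci hsv).2
    have huniq : HasDerivAt (fun _ : ℝ => B b.1 b.2) (fderiv ℝ h u v b.1) 0 :=
      hproj.congr_of_eventuallyEq hconst.symm
    exact (huniq.unique (hasDerivAt_const _ _))
  -- Step B3: derivative vanishing on closures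
  have hderiv : ∀ b, ∀ w, w ∈ closure (V b) → w ∈ S → ∀ v : Euc d, v i = 0 →
      fderiv ℝ h w v b.1 = 0 := by
    intro b w hwc hwS v hvi
    obtain ⟨x, hxV, hxlim⟩ := mem_closure_iff_seq_limit.mp hwc
    have hfC : ContinuousOn (fderiv ℝ h) S :=
      hdiff.smooth.continuousOn_fderiv_of_isOpen hS (by exact_mod_cast le_top)
    have hcont : ContinuousAt (fun u : Euc d => fderiv ℝ h u v b.1) w := by
      have h1 : ContinuousAt (fderiv ℝ h) w := hfC.continuousAt (hS.mem_nhds hwS)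
      have h2 : Continuous (fun A : Euc d →L[ℝ] Euc d => A v b.1) := by
        have h3 := (ContinuousLinearMap.apply ℝ (Euc d) v).continuous
        exact ((EuclideanSpace.proj b.1).continuous).comp h3
      exact h2.continuousAt.comp h1
    have hlim := hcont.tendsto.comp hxlim
    have hvals : (fun n => fderiv ℝ h (x n) v b.1) = fun _ => (0:ℝ) := by
      funext n; exact hderivV b (x n) (hxV n) v hvi
    rw [show ((fun u : Euc d => fderiv ℝ h u v b.1) ∘ x) = fun n => fderiv ℝ h (x n) v b.1 from rfl,
      hvals] at hlim
    exact (tendsto_nhds_unique hlim tendsto_const_nhds)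
  -- Step C: closures of distinct V b are disjoint on G
  have hdisj : ∀ b b' : ((j : Fin d) × Fin (n' j)), b ≠ b' → ∀ w ∈ G,
      w ∈ closure (V b) → w ∈ closure (V b') → False := by
    intro b b' hne w hwG hc1 hc2
    have hwS := hwG.1
    have h1 := hval b w hc1 hwS
    have h2 := hval b' w hc2 hwS
    by_cases hj : b.1 = b'.1
    · obtain ⟨j1, l1⟩ := b
      obtain ⟨j2, l2⟩ := b'
      dsimp at hj
      subst hj
      dsimp at h1 h2
      have hl : l1 = l2 := hBinj j1 (by rw [← h1, ← h2])
      exact hne (by rw [hl])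
    · have h2d : 2 ≤ d := by
        by_contra hlt
        push_neg at hlt
        have hcard : Fintype.card (Fin d) ≤ 1 := by simpa using Nat.lt_succ_iff.mp hlt
        haveI := Fintype.card_le_one_iff_subsingleton.mp hcard
        exact hj (Subsingleton.elim _ _)
      set Df := fderiv ℝ h w with hDfdef
      have hDfinj : Function.Injective Df := by
        have hev : (fun z => hinv (h z)) =ᶠ[nhds w] id :=
          Filter.eventually_of_mem (hS.mem_nhds hwS) (fun z hz => hdiff.left_inv z hz)
        have hdA : DifferentiableAt ℝ h w :=
          (hdiff.smooth.differentiableOn (by simp)).differentiableAt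
            (hS.mem_nhds hwS)
        have hdB : DifferentiableAt ℝ hinv (h w) :=
          (hdiff.smooth_inv.differentiableOn (by simp)).differentiableAt
            (hS'.mem_nhds (hdiff.mapsTo hwS))
        have hcomp : (fderiv ℝ hinv (h w)).comp Df = ContinuousLinearMap.id ℝ (Euc d) := by
          have e1 : fderiv ℝ (hinv ∘ h) w = (fderiv ℝ hinv (h w)).comp Df :=
            fderiv_comp w hdB hdA
          have e2 : fderiv ℝ (fun z => hinv (h z)) w = fderiv ℝ id w := hev.fderiv_eq
          rw [fderiv_id] at e2
          rw [← e1]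
          exact e2
        intro a a' haa
        have h3 : ∀ x, fderiv ℝ hinv (h w) (Df x) = x := by
          intro x
          have h4 := ContinuousLinearMap.ext_iff.mp hcomp x
          simpa using h4
        rw [← h3 a, ← h3 a', haa]
      set π1 : Euc d →ₗ[ℝ] ℝ := (EuclideanSpace.proj (𝕜 := ℝ) i).toLinearMap with hπ1def
      have hπ1surj : Function.Surjective π1 := by
        intro r
        refine ⟨EuclideanSpace.single i r, ?_⟩
        show (EuclideanSpace.single i r : Euc d) i = r
        simp [EuclideanSpace.single_apply]
      have hrk1 : Module.finrank ℝ (LinearMap.ker π1) = d - 1 := by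
        have h5 := LinearMap.finrank_range_add_finrank_ker π1
        rw [LinearMap.range_eq_top.mpr hπ1surj, finrank_top] at h5
        rw [finrank_euclideanSpace_fin] at h5
        simp at h5
        omega
      set ρ : Euc d →ₗ[ℝ] ℝ × ℝ :=
        LinearMap.prod (EuclideanSpace.proj (𝕜 := ℝ) b.1).toLinearMap
          (EuclideanSpace.proj (𝕜 := ℝ) b'.1).toLinearMap with hρdef
      have hρsurj : Function.Surjective ρ := by
        intro p
        refine ⟨EuclideanSpace.single b.1 p.1 + EuclideanSpace.single b'.1 p.2, ?_⟩
        have e1 : (EuclideanSpace.single b.1 p.1 + EuclideanSpace.single b'.1 p.2 : Euc d) b.1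
            = p.1 := by
          show (EuclideanSpace.single b.1 p.1 : Euc d) b.1
            + (EuclideanSpace.single b'.1 p.2 : Euc d) b.1 = p.1
          rw [EuclideanSpace.single_apply, EuclideanSpace.single_apply,
            if_pos rfl, if_neg hj]
          ring
        have e2 : (EuclideanSpace.single b.1 p.1 + EuclideanSpace.single b'.1 p.2 : Euc d) b'.1
            = p.2 := by
          show (EuclideanSpace.single b.1 p.1 : Euc d) b'.1
            + (EuclideanSpace.single b'.1 p.2 : Euc d) b'.1 = p.2
          rw [EuclideanSpace.single_apply, EuclideanSpace.single_apply,
            if_pos rfl, if_neg (fun e => hj e.symm)]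
          ring
        exact Prod.ext e1 e2
      have hrk2 : Module.finrank ℝ (LinearMap.ker ρ) = d - 2 := by
        have h5 := LinearMap.finrank_range_add_finrank_ker ρ
        rw [LinearMap.range_eq_top.mpr hρsurj, finrank_top] at h5
        rw [finrank_euclideanSpace_fin] at h5
        rw [Module.finrank_prod] at h5
        simp at h5
        omega
      have hmaple : (LinearMap.ker π1).map (Df : Euc d →ₗ[ℝ] Euc d) ≤ LinearMap.ker ρ := by
        rintro x hx
        obtain ⟨v, hv, rfl⟩ := hx
        have hvi : v i = 0 := hv
        have e1 := hderiv b w hc1 hwS v hvi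
        have e2 := hderiv b' w hc2 hwS v hvi
        rw [LinearMap.mem_ker]
        exact Prod.ext e1 e2
      have hrkmap : Module.finrank ℝ ((LinearMap.ker π1).map (Df : Euc d →ₗ[ℝ] Euc d)) = d - 1 := by
        rw [← hrk1]
        exact (LinearEquiv.finrank_eq
          (Submodule.equivMapOfInjective (Df : Euc d →ₗ[ℝ] Euc d)
            (by exact hDfinj) (LinearMap.ker π1))).symm
      have hfin := Submodule.finrank_mono hmaple
      rw [hrkmap, hrk2] at hfin
      omega
  -- Step D: cover G by closures
  have hcover : ∀ w ∈ G, ∃ b, w ∈ closure (V b) := by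
    intro w hw
    by_contra hnone
    push_neg at hnone
    have hU : IsOpen (⋂ b, (closure (V b))ᶜ) :=
      isOpen_iInter_of_finite fun b => isClosed_closure.isOpen_compl
    have hwU : w ∈ ⋂ b, (closure (V b))ᶜ := mem_iInter.mpr fun b => hnone b
    obtain ⟨ε, hε, hball⟩ := Metric.isOpen_iff.mp hU w hwU
    obtain ⟨b, w', hw'V, hw'd⟩ := hdense w hw ε hε
    have hmem : w' ∈ (closure (V b))ᶜ := mem_iInter.mp (hball (Metric.mem_ball.mpr hw'd)) b
    exact hmem (subset_closure hw'V)
  -- Step E: connectedness forces a single b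
  obtain ⟨w0, hw0G⟩ := hconn.nonempty
  obtain ⟨b0, wstar, hwstarV, _⟩ := hdense w0 hw0G 1 one_pos
  set Cset : Set (Euc d) := ⋃ b ∈ {b : ((j : Fin d) × Fin (n' j)) | b ≠ b0}, closure (V b)
    with hCdef
  have hCclosed : IsClosed Cset :=
    (Set.toFinite _).isClosed_biUnion fun b _ => isClosed_closure
  have hGsub : G ⊆ Csetᶜ ∪ (closure (V b0))ᶜ := by
    intro w hw
    by_contra hcon
    simp only [mem_union, mem_compl_iff, not_or, not_not] at hcon
    obtain ⟨hwC, hwb0⟩ := hcon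
    simp only [hCdef, mem_iUnion, mem_setOf_eq, exists_prop] at hwC
    obtain ⟨b, hbne, hwb⟩ := hwC
    exact hdisj b b0 hbne w hw hwb hwb0
  rcases em ((G ∩ (closure (V b0))ᶜ).Nonempty) with hB | hB
  · exfalso
    rcases em ((G ∩ Csetᶜ).Nonempty) with hA | hA
    · obtain ⟨w, hwG, hwu, hwv⟩ := hconn.isPreconnected Csetᶜ (closure (V b0))ᶜ
        hCclosed.isOpen_compl isClosed_closure.isOpen_compl hGsub hA hB
      obtain ⟨b, hb⟩ := hcover w hwG
      rcases em (b = b0) with rfl | hbne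
      · exact hwv hb
      · refine hwu ?_
        simp only [hCdef, mem_iUnion, mem_setOf_eq, exists_prop]
        exact ⟨b, hbne, hb⟩
    · have hsubC : G ⊆ Cset := by
        intro w hw
        by_contra hnc
        exact hA ⟨w, hw, hnc⟩
      have hwstarG : wstar ∈ G := hwstarV.1
      have hmem := hsubC hwstarG
      simp only [hCdef, mem_iUnion, mem_setOf_eq, exists_prop] at hmem
      obtain ⟨b, hbne, hwb⟩ := hmem
      exact hdisj b b0 hbne wstar hwstarG hwb (subset_closure hwstarV)
  · refine ⟨b0.1, b0.2, fun w hw => ?_⟩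
    have hwc : w ∈ closure (V b0) := by
      by_contra hnc
      exact hB ⟨w, hw, hnc⟩
    exact hval b0 w hwc hw.1

lemma conn_dichotomy {d : ℕ} {h : Euc d → Euc d} {T : Set (Euc d)}
    (hT : IsConnected T) (hc : ContinuousOn h T) (jj : Fin d) (c : ℝ)
    (hne : ∀ w ∈ T, h w jj ≠ c) :
    (∀ w ∈ T, c < h w jj) ∨ (∀ w ∈ T, h w jj < c) := by
  have hTim : IsConnected (h '' T) := hT.image h hc
  have hopenU : IsOpen {z' : Euc d | c < z' jj} :=
    isOpen_lt continuous_const (EuclideanSpace.proj jj).continuous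
  have hopenD : IsOpen {z' : Euc d | z' jj < c} :=
    isOpen_lt (EuclideanSpace.proj jj).continuous continuous_const
  have hsub : h '' T ⊆ {z' : Euc d | c < z' jj} ∪ {z' : Euc d | z' jj < c} := by
    rintro _ ⟨w, hw, rfl⟩
    rcases lt_trichotomy (h w jj) c with hlt | heq | hgt
    · exact Or.inr hlt
    · exact absurd heq (hne w hw)
    · exact Or.inl hgt
  rcases em ((h '' T ∩ {z' : Euc d | c < z' jj}).Nonempty) with hA | hA
  · rcases em ((h '' T ∩ {z' : Euc d | z' jj < c}).Nonempty) with hB | hB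
    · exfalso
      obtain ⟨y, _, hy1, hy2⟩ := hTim.isPreconnected _ _ hopenU hopenD hsub hA hB
      simp only [mem_setOf_eq] at hy1 hy2
      linarith
    · left
      intro w hw
      rcases hsub (mem_image_of_mem h hw) with h' | h'
      · exact h'
      · exact (hB ⟨h w, mem_image_of_mem h hw, h'⟩).elim
  · right
    intro w hw
    rcases hsub (mem_image_of_mem h hw) with h' | h'
    · exact (hA ⟨h w, mem_image_of_mem h hw, h'⟩).elim
    · exact h'

set_option maxHeartbeats 1000000 in
/-- **Recovery of quantized factors (Corollary).** -/
theorem recovery_of_quantized_factors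
    {d : ℕ} {S S' : Set (Euc d)} (hS : IsOpen S) (hSc : IsConnected S)
    (hS' : IsOpen S') (hS'c : IsConnected S')
    {h hinv : Euc d → Euc d} (hdiff : IsSmoothDiffeoOn h hinv S S')
    (CA : DiscreteCoordination S) (hbb : CA.HasBackbone)
    (CB : DiscreteCoordination S')
    (hgrid : h '' CA.grid = CB.grid) :
    ∃ (σ : Equiv.Perm (Fin d)) (s : Fin d → ℤ),
      (∀ i, s i = 1 ∨ s i = -1) ∧
      ∀ i : Fin d, ∀ z ∈ S, Q (z i) (CA.A i) = Qsgn (s i) (h z (σ i)) (CB.A (σ i)) := by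
  classical
  have hgridAS : CA.grid ⊆ S := by
    intro w hw
    simp only [DiscreteCoordination.grid, mem_iUnion] at hw
    obtain ⟨i, k, hw⟩ := hw
    exact hw.1
  have himgA : ∀ (i : Fin d) (k : Fin (CA.n i)), ∀ w ∈ Gamma S i (CA.A i k),
      ∃ (j : Fin d) (l : Fin (CB.n j)), h w j = CB.A j l := by
    intro i k w hw
    have h1 : w ∈ CA.grid := by
      simp only [DiscreteCoordination.grid, mem_iUnion]; exact ⟨i, k, hw⟩
    have h2 : h w ∈ CB.grid := hgrid ▸ ⟨w, h1, rfl⟩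
    simp only [DiscreteCoordination.grid, mem_iUnion] at h2
    obtain ⟨j, l, hjl⟩ := h2
    exact ⟨j, l, hjl.2⟩
  have hdiff' : IsSmoothDiffeoOn hinv h S' S :=
    ⟨hdiff.mapsTo_inv, hdiff.mapsTo, hdiff.right_inv, hdiff.left_inv,
      hdiff.smooth_inv, hdiff.smooth⟩
  have himgB : ∀ (jj : Fin d) (ll : Fin (CB.n jj)), ∀ w' ∈ Gamma S' jj (CB.A jj ll),
      ∃ (ii : Fin d) (kk : Fin (CA.n ii)), hinv w' ii = CA.A ii kk := by
    intro jj ll w' hw'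
    have h1 : w' ∈ CB.grid := by
      simp only [DiscreteCoordination.grid, mem_iUnion]; exact ⟨jj, ll, hw'⟩
    rw [← hgrid] at h1
    obtain ⟨w, hwg, hww⟩ := h1
    have hwS : w ∈ S := hgridAS hwg
    have he : hinv w' = w := by rw [← hww]; exact hdiff.left_inv w hwS
    simp only [DiscreteCoordination.grid, mem_iUnion] at hwg
    obtain ⟨ii, kk, hik⟩ := hwg
    exact ⟨ii, kk, by rw [he]; exact hik.2⟩
  have hBinj : ∀ jj, Function.Injective (CB.A jj) := fun jj => (CB.mono jj).injective
  have hAinj : ∀ ii, Function.Injective (CA.A ii) := fun ii => (CA.mono ii).injective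
  have HL1 : ∀ (i : Fin d) (k : Fin (CA.n i)), ∃ (j : Fin d) (l : Fin (CB.n j)),
      ∀ w ∈ Gamma S i (CA.A i k), h w j = CB.A j l :=
    fun i k => key_L1 hS hS' hdiff hBinj (CA.sep i k).1 (himgA i k)
  choose j0 l0 hjl using HL1
  have HL1' : ∀ (jj : Fin d) (ll : Fin (CB.n jj)), ∃ (ii : Fin d) (kk : Fin (CA.n ii)),
      ∀ w' ∈ Gamma S' jj (CB.A jj ll), hinv w' ii = CA.A ii kk :=
    fun jj ll => key_L1 hS' hS hdiff' hAinj (CB.sep jj ll).1 (himgB jj ll)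
  choose i0 k0 hikB using HL1'
  have hΓAne : ∀ i k, (Gamma S i (CA.A i k)).Nonempty := fun i k => (CA.sep i k).1.nonempty
  have hΓBne : ∀ jj ll, (Gamma S' jj (CB.A jj ll)).Nonempty :=
    fun jj ll => (CB.sep jj ll).1.nonempty
  have hinvh : ∀ T : Set (Euc d), T ⊆ S → hinv '' (h '' T) = T := by
    intro T hT
    ext w
    constructor
    · rintro ⟨_, ⟨u, hu, rfl⟩, rfl⟩
      rw [hdiff.left_inv u (hT hu)]
      exact hu
    · intro hw
      exact ⟨h w, ⟨w, hw, rfl⟩, hdiff.left_inv w (hT hw)⟩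
  have himg_eq : ∀ i k, h '' Gamma S i (CA.A i k)
      = Gamma S' (j0 i k) (CB.A (j0 i k) (l0 i k)) := by
    intro i k
    apply Subset.antisymm
    · rintro _ ⟨w, hw, rfl⟩
      exact ⟨hdiff.mapsTo hw.1, hjl i k w hw⟩
    · intro z' hz'
      have hsub : Gamma S i (CA.A i k)
          ⊆ Gamma S (i0 (j0 i k) (l0 i k))
            (CA.A (i0 (j0 i k) (l0 i k)) (k0 (j0 i k) (l0 i k))) := by
        intro w hw
        have h1 : h w ∈ Gamma S' (j0 i k) (CB.A (j0 i k) (l0 i k)) :=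
          ⟨hdiff.mapsTo hw.1, hjl i k w hw⟩
        have h2 := hikB (j0 i k) (l0 i k) (h w) h1
        rw [hdiff.left_inv w hw.1] at h2
        exact ⟨hw.1, h2⟩
      obtain ⟨hieq, hτeq⟩ := gamma_subset_gamma hS (hΓAne i k) hsub
      have h1 := hikB (j0 i k) (l0 i k) z' hz'
      have h2 : hinv z' i = CA.A i k := by
        have e1 : hinv z' i = hinv z' (i0 (j0 i k) (l0 i k)) := by rw [hieq]
        rw [e1, h1, hτeq]
      exact ⟨hinv z', ⟨hdiff.mapsTo_inv hz'.1, h2⟩, hdiff.right_inv z' hz'.1⟩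
  have hpre_eq : ∀ i k, hinv '' Gamma S' (j0 i k) (CB.A (j0 i k) (l0 i k))
      = Gamma S i (CA.A i k) := by
    intro i k
    rw [← himg_eq i k, hinvh _ (fun w hw => hw.1)]
  have hgammaA_inj : ∀ i1 k1 i2 k2,
      Gamma S i1 (CA.A i1 k1) = Gamma S i2 (CA.A i2 k2) → i1 = i2 := by
    intro i1 k1 i2 k2 he
    exact ((gamma_subset_gamma hS (hΓAne i1 k1) he.subset).1).symm
  obtain ⟨kstar, ⟨z0, hz0⟩, hmeets⟩ := hbb
  have hz0mem : ∀ i, z0 ∈ Gamma S i (CA.A i (kstar i)) := by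
    intro i
    have h1 : z0 ∈ ⋂ (i : Fin d), Gamma S i (CA.A i (kstar i)) := by
      rw [hz0]; exact Set.mem_singleton z0
    exact mem_iInter.mp h1 i
  set σ0 : Fin d → Fin d := fun i => j0 i (kstar i) with hσ0def
  have hpair_eq : ∀ i1 k1 i2 k2, j0 i1 k1 = j0 i2 k2 →
      CB.A (j0 i1 k1) (l0 i1 k1) = CB.A (j0 i2 k2) (l0 i2 k2) →
      Gamma S i1 (CA.A i1 k1) = Gamma S i2 (CA.A i2 k2) := by
    intro i1 k1 i2 k2 hj hv
    rw [← hpre_eq i1 k1, ← hpre_eq i2 k2, hv, hj]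
  have hσinj : Function.Injective σ0 := by
    intro i1 i2 he
    have hm1 := hjl i1 (kstar i1) z0 (hz0mem i1)
    have hm2 := hjl i2 (kstar i2) z0 (hz0mem i2)
    have hv : CB.A (j0 i1 (kstar i1)) (l0 i1 (kstar i1))
        = CB.A (j0 i2 (kstar i2)) (l0 i2 (kstar i2)) := by
      rw [← hm1, ← hm2]
      show h z0 (j0 i1 (kstar i1)) = h z0 (j0 i2 (kstar i2))
      have he' : j0 i1 (kstar i1) = j0 i2 (kstar i2) := he
      rw [he']
    exact hgammaA_inj i1 (kstar i1) i2 (kstar i2) (hpair_eq _ _ _ _ he hv)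
  have hσbij : Function.Bijective σ0 := Finite.injective_iff_bijective.mp hσinj
  have haxis : ∀ i k, j0 i k = σ0 i := by
    intro i k
    obtain ⟨i', hi'⟩ := hσbij.2 (j0 i k)
    by_cases hii : i' = i
    · rw [← hi', hii]
    · exfalso
      obtain ⟨z1, hz1a, hz1b⟩ := hmeets i' i (fun e => hii e.symm) k
      have hm1 := hjl i' (kstar i') z1 hz1a
      have hm2 := hjl i k z1 hz1b
      have he : j0 i' (kstar i') = j0 i k := hi'
      have hv : CB.A (j0 i' (kstar i')) (l0 i' (kstar i'))
          = CB.A (j0 i k) (l0 i k) := by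
        rw [← hm1, ← hm2, he]
      exact hii (hgammaA_inj i' (kstar i') i k (hpair_eq _ _ _ _ he hv))
  have Hmain : ∀ i k, ∃ l' : Fin (CB.n (σ0 i)),
      h '' Gamma S i (CA.A i k) = Gamma S' (σ0 i) (CB.A (σ0 i) l') := by
    intro i k
    have e := haxis i k
    rw [← e]
    exact ⟨l0 i k, himg_eq i k⟩
  choose ψ himgψ using Hmain
  have hψcoord : ∀ i k, ∀ w ∈ Gamma S i (CA.A i k),
      h w (σ0 i) = CB.A (σ0 i) (ψ i k) := by
    intro i k w hw
    have h1 : h w ∈ Gamma S' (σ0 i) (CB.A (σ0 i) (ψ i k)) := by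
      rw [← himgψ i k]; exact mem_image_of_mem h hw
    exact h1.2
  have hpreψ : ∀ i k, hinv '' Gamma S' (σ0 i) (CB.A (σ0 i) (ψ i k))
      = Gamma S i (CA.A i k) := by
    intro i k
    rw [← himgψ i k, hinvh _ (fun w hw => hw.1)]
  have hψinj : ∀ i (k1 k2 : Fin (CA.n i)), ψ i k1 = ψ i k2 → k1 = k2 := by
    intro i k1 k2 he
    have h1 : Gamma S i (CA.A i k1) = Gamma S i (CA.A i k2) := by
      rw [← hpreψ i k1, ← hpreψ i k2, he]
    have h2 := (gamma_subset_gamma hS (hΓAne i k1) h1.subset).2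
    exact (hAinj i h2).symm
  have hψsurj : ∀ i (l' : Fin (CB.n (σ0 i))), ∃ k, ψ i k = l' := by
    intro i l'
    have key : ∀ (ii : Fin d) (kk : Fin (CA.n ii)), σ0 ii = σ0 i →
        CB.A (σ0 ii) (ψ ii kk) = CB.A (σ0 i) l' → ∃ k, ψ i k = l' := by
      intro ii kk hje hτe
      have hiieq : ii = i := hσinj hje
      subst hiieq
      exact ⟨kk, hBinj _ hτe⟩
    have hsub : Gamma S' (σ0 i) (CB.A (σ0 i) l')
        ⊆ Gamma S' (σ0 (i0 (σ0 i) l'))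
          (CB.A (σ0 (i0 (σ0 i) l')) (ψ (i0 (σ0 i) l') (k0 (σ0 i) l'))) := by
      intro z' hz'
      have h1 : hinv z' ∈ Gamma S (i0 (σ0 i) l') (CA.A (i0 (σ0 i) l') (k0 (σ0 i) l')) :=
        ⟨hdiff.mapsTo_inv hz'.1, hikB (σ0 i) l' z' hz'⟩
      have h2 : h (hinv z') ∈ Gamma S' (σ0 (i0 (σ0 i) l'))
          (CB.A (σ0 (i0 (σ0 i) l')) (ψ (i0 (σ0 i) l') (k0 (σ0 i) l'))) := by
        rw [← himgψ (i0 (σ0 i) l') (k0 (σ0 i) l')]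
        exact mem_image_of_mem h h1
      rwa [hdiff.right_inv z' hz'.1] at h2
    obtain ⟨hje, hτe⟩ := gamma_subset_gamma hS' (hΓBne (σ0 i) l') hsub
    exact key (i0 (σ0 i) l') (k0 (σ0 i) l') hje hτe
  have hPosS : ∀ i k, GammaPos S i (CA.A i k) ⊆ S := fun i k w hw => hw.1
  have hNegS : ∀ i k, GammaNeg S i (CA.A i k) ⊆ S := fun i k w hw => hw.1
  have hbackA : ∀ i k (w : Euc d), w ∈ S → h w (σ0 i) = CB.A (σ0 i) (ψ i k) →
      w ∈ Gamma S i (CA.A i k) := by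
    intro i k w hwS he
    have h1 : h w ∈ Gamma S' (σ0 i) (CB.A (σ0 i) (ψ i k)) := ⟨hdiff.mapsTo hwS, he⟩
    have h2 : hinv (h w) ∈ Gamma S i (CA.A i k) := by
      rw [← hpreψ i k]; exact mem_image_of_mem hinv h1
    rwa [hdiff.left_inv w hwS] at h2
  have hnotonPos : ∀ i k, ∀ w ∈ GammaPos S i (CA.A i k),
      h w (σ0 i) ≠ CB.A (σ0 i) (ψ i k) := by
    intro i k w hw he
    have h2 := hbackA i k w hw.1 he
    exact absurd h2.2 (ne_of_gt hw.2)
  have hnotonNeg : ∀ i k, ∀ w ∈ GammaNeg S i (CA.A i k),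
      h w (σ0 i) ≠ CB.A (σ0 i) (ψ i k) := by
    intro i k w hw he
    have h2 := hbackA i k w hw.1 he
    exact absurd h2.2 (ne_of_lt hw.2)
  have hPosDich : ∀ i k,
      (∀ w ∈ GammaPos S i (CA.A i k), CB.A (σ0 i) (ψ i k) < h w (σ0 i))
      ∨ (∀ w ∈ GammaPos S i (CA.A i k), h w (σ0 i) < CB.A (σ0 i) (ψ i k)) :=
    fun i k => conn_dichotomy (CA.sep i k).2.1
      (hdiff.smooth.continuousOn.mono (hPosS i k)) _ _ (hnotonPos i k)
  have hNegDich : ∀ i k,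
      (∀ w ∈ GammaNeg S i (CA.A i k), CB.A (σ0 i) (ψ i k) < h w (σ0 i))
      ∨ (∀ w ∈ GammaNeg S i (CA.A i k), h w (σ0 i) < CB.A (σ0 i) (ψ i k)) :=
    fun i k => conn_dichotomy (CA.sep i k).2.2
      (hdiff.smooth.continuousOn.mono (hNegS i k)) _ _ (hnotonNeg i k)
  have hopp1 : ∀ i k, (∀ w ∈ GammaPos S i (CA.A i k), CB.A (σ0 i) (ψ i k) < h w (σ0 i)) →
      (∀ w ∈ GammaNeg S i (CA.A i k), h w (σ0 i) < CB.A (σ0 i) (ψ i k)) := by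
    intro i k hP
    rcases hNegDich i k with hN | hN
    · exfalso
      obtain ⟨z', hz'⟩ := (CB.sep (σ0 i) (ψ i k)).2.2.nonempty
      have hwS : hinv z' ∈ S := hdiff.mapsTo_inv hz'.1
      have hwz : h (hinv z') = z' := hdiff.right_inv z' hz'.1
      rcases lt_trichotomy ((hinv z') i) (CA.A i k) with hlt | heq | hgt
      · have h1 := hN (hinv z') ⟨hwS, hlt⟩
        rw [hwz] at h1
        exact absurd hz'.2 (not_lt.mpr (le_of_lt h1))
      · have h1 := hψcoord i k (hinv z') ⟨hwS, heq⟩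
        rw [hwz] at h1
        exact absurd hz'.2 (not_lt.mpr (le_of_eq h1.symm))
      · have h1 := hP (hinv z') ⟨hwS, hgt⟩
        rw [hwz] at h1
        exact absurd hz'.2 (not_lt.mpr (le_of_lt h1))
    · exact hN
  have hopp2 : ∀ i k, (∀ w ∈ GammaPos S i (CA.A i k), h w (σ0 i) < CB.A (σ0 i) (ψ i k)) →
      (∀ w ∈ GammaNeg S i (CA.A i k), CB.A (σ0 i) (ψ i k) < h w (σ0 i)) := by
    intro i k hP
    rcases hNegDich i k with hN | hN
    · exact hN
    · exfalso
      obtain ⟨z', hz'⟩ := (CB.sep (σ0 i) (ψ i k)).2.1.nonempty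
      have hwS : hinv z' ∈ S := hdiff.mapsTo_inv hz'.1
      have hwz : h (hinv z') = z' := hdiff.right_inv z' hz'.1
      rcases lt_trichotomy ((hinv z') i) (CA.A i k) with hlt | heq | hgt
      · have h1 := hN (hinv z') ⟨hwS, hlt⟩
        rw [hwz] at h1
        exact absurd hz'.2 (not_lt.mpr (le_of_lt h1))
      · have h1 := hψcoord i k (hinv z') ⟨hwS, heq⟩
        rw [hwz] at h1
        exact absurd hz'.2 (not_lt.mpr (le_of_eq h1))
      · have h1 := hP (hinv z') ⟨hwS, hgt⟩
        rw [hwz] at h1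
        exact absurd hz'.2 (not_lt.mpr (le_of_lt h1))
  have hord : ∀ i (k k' : Fin (CA.n i)), k < k' →
      ((∀ w ∈ GammaPos S i (CA.A i k), CB.A (σ0 i) (ψ i k) < h w (σ0 i)) ↔
       (∀ w ∈ GammaPos S i (CA.A i k'), CB.A (σ0 i) (ψ i k') < h w (σ0 i))) := by
    intro i k k' hkk'
    have hAlt : CA.A i k < CA.A i k' := CA.mono i hkk'
    have hsub1 : ∀ w ∈ Gamma S i (CA.A i k'), w ∈ GammaPos S i (CA.A i k) :=
      fun w hw => ⟨hw.1, by rw [hw.2]; exact hAlt⟩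
    have hsub2 : ∀ w ∈ Gamma S i (CA.A i k), w ∈ GammaNeg S i (CA.A i k') :=
      fun w hw => ⟨hw.1, by rw [hw.2]; exact hAlt⟩
    constructor
    · intro hPk
      by_contra hnPk'
      have hPk'dn : ∀ w ∈ GammaPos S i (CA.A i k'), h w (σ0 i) < CB.A (σ0 i) (ψ i k') := by
        rcases hPosDich i k' with hX | hX
        · exact absurd hX hnPk'
        · exact hX
      have hNk'up := hopp2 i k' hPk'dn
      obtain ⟨w1, hw1⟩ := hΓAne i k'
      have e1 : h w1 (σ0 i) = CB.A (σ0 i) (ψ i k') := hψcoord i k' w1 hw1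
      have e2 : CB.A (σ0 i) (ψ i k) < h w1 (σ0 i) := hPk w1 (hsub1 w1 hw1)
      obtain ⟨w2, hw2⟩ := hΓAne i k
      have e3 : h w2 (σ0 i) = CB.A (σ0 i) (ψ i k) := hψcoord i k w2 hw2
      have e4 : CB.A (σ0 i) (ψ i k') < h w2 (σ0 i) := hNk'up w2 (hsub2 w2 hw2)
      linarith
    · intro hPk'
      by_contra hnPk
      have hPkdn : ∀ w ∈ GammaPos S i (CA.A i k), h w (σ0 i) < CB.A (σ0 i) (ψ i k) := by
        rcases hPosDich i k with hX | hX
        · exact absurd hX hnPk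
        · exact hX
      obtain ⟨w1, hw1⟩ := hΓAne i k'
      have e1 : h w1 (σ0 i) = CB.A (σ0 i) (ψ i k') := hψcoord i k' w1 hw1
      have e2 : h w1 (σ0 i) < CB.A (σ0 i) (ψ i k) := hPkdn w1 (hsub1 w1 hw1)
      have hNk'dn := hopp1 i k' hPk'
      obtain ⟨w2, hw2⟩ := hΓAne i k
      have e3 : h w2 (σ0 i) = CB.A (σ0 i) (ψ i k) := hψcoord i k w2 hw2
      have e4 : h w2 (σ0 i) < CB.A (σ0 i) (ψ i k') := hNk'dn w2 (hsub2 w2 hw2)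
      linarith
  have hPredConst : ∀ i (k k' : Fin (CA.n i)),
      (∀ w ∈ GammaPos S i (CA.A i k), CB.A (σ0 i) (ψ i k) < h w (σ0 i)) →
      (∀ w ∈ GammaPos S i (CA.A i k'), CB.A (σ0 i) (ψ i k') < h w (σ0 i)) := by
    intro i k k' hk
    rcases lt_trichotomy k k' with hlt | heq | hgt
    · exact (hord i k k' hlt).mp hk
    · exact heq ▸ hk
    · exact (hord i k' k hgt).mpr hk
  set s : Fin d → ℤ := fun i =>
    if ∀ w ∈ GammaPos S i (CA.A i ⟨0, CA.n_pos i⟩),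
        CB.A (σ0 i) (ψ i ⟨0, CA.n_pos i⟩) < h w (σ0 i) then 1 else -1 with hsdef
  refine ⟨Equiv.ofBijective σ0 hσbij, s, fun i => ?_, fun i z hz => ?_⟩
  · by_cases hc : ∀ w ∈ GammaPos S i (CA.A i ⟨0, CA.n_pos i⟩),
        CB.A (σ0 i) (ψ i ⟨0, CA.n_pos i⟩) < h w (σ0 i)
    · left; simp only [hsdef]; rw [if_pos hc]
    · right; simp only [hsdef]; rw [if_neg hc]
  · have hσeq : (Equiv.ofBijective σ0 hσbij) i = σ0 i := rfl
    rw [hσeq]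
    by_cases hPred : ∀ w ∈ GammaPos S i (CA.A i ⟨0, CA.n_pos i⟩),
        CB.A (σ0 i) (ψ i ⟨0, CA.n_pos i⟩) < h w (σ0 i)
    · have hsi : s i = 1 := by simp only [hsdef]; rw [if_pos hPred]
      rw [hsi]
      have hQ : Qsgn 1 (h z (σ0 i)) (CB.A (σ0 i)) = Q (h z (σ0 i)) (CB.A (σ0 i)) := by
        simp [Qsgn]
      rw [hQ]
      have hallP : ∀ k, ∀ w ∈ GammaPos S i (CA.A i k),
          CB.A (σ0 i) (ψ i k) < h w (σ0 i) :=
        fun k => hPredConst i _ k hPred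
      have hallN : ∀ k, ∀ w ∈ GammaNeg S i (CA.A i k),
          h w (σ0 i) < CB.A (σ0 i) (ψ i k) :=
        fun k => hopp1 i k (hallP k)
      have hiff : ∀ k, CA.A i k ≤ z i ↔ CB.A (σ0 i) (ψ i k) ≤ h z (σ0 i) := by
        intro k
        constructor
        · intro hle
          rcases eq_or_lt_of_le hle with heq | hlt
          · exact le_of_eq (hψcoord i k z ⟨hz, heq.symm⟩).symm
          · exact le_of_lt (hallP k z ⟨hz, hlt⟩)
        · intro hle
          by_contra hnle
          push_neg at hnle
          have h1 := hallN k z ⟨hz, hnle⟩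
          linarith
      unfold Q
      apply Finset.card_bij (fun k _ => ψ i k)
      · intro a ha
        simp only [Finset.mem_filter, Finset.mem_univ, true_and] at ha ⊢
        exact (hiff a).mp ha
      · intro a1 h1 a2 h2 he
        exact hψinj i a1 a2 he
      · intro b hb
        simp only [Finset.mem_filter, Finset.mem_univ, true_and] at hb
        obtain ⟨k, hk⟩ := hψsurj i b
        refine ⟨k, ?_, hk⟩
        simp only [Finset.mem_filter, Finset.mem_univ, true_and]
        exact (hiff k).mpr (by rw [hk]; exact hb)
    · have hsi : s i = -1 := by simp only [hsdef]; rw [if_neg hPred]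
      rw [hsi]
      have hQ : Qsgn (-1) (h z (σ0 i)) (CB.A (σ0 i)) = Qneg (h z (σ0 i)) (CB.A (σ0 i)) := by
        norm_num [Qsgn]
      rw [hQ]
      have hallP : ∀ k, ∀ w ∈ GammaPos S i (CA.A i k),
          h w (σ0 i) < CB.A (σ0 i) (ψ i k) := by
        intro k
        rcases hPosDich i k with hX | hX
        · exact absurd (hPredConst i k ⟨0, CA.n_pos i⟩ hX) hPred
        · exact hX
      have hallN : ∀ k, ∀ w ∈ GammaNeg S i (CA.A i k),
          CB.A (σ0 i) (ψ i k) < h w (σ0 i) :=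
        fun k => hopp2 i k (hallP k)
      have hiff : ∀ k, CA.A i k ≤ z i ↔ h z (σ0 i) ≤ CB.A (σ0 i) (ψ i k) := by
        intro k
        constructor
        · intro hle
          rcases eq_or_lt_of_le hle with heq | hlt
          · exact le_of_eq (hψcoord i k z ⟨hz, heq.symm⟩)
          · exact le_of_lt (hallP k z ⟨hz, hlt⟩)
        · intro hle
          by_contra hnle
          push_neg at hnle
          have h1 := hallN k z ⟨hz, hnle⟩
          linarith
      unfold Q Qneg
      apply Finset.card_bij (fun k _ => ψ i k)
      · intro a ha
        simp only [Finset.mem_filter, Finset.mem_univ, true_and] at ha ⊢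
        exact (hiff a).mp ha
      · intro a1 h1 a2 h2 he
        exact hψinj i a1 a2 he
      · intro b hb
        simp only [Finset.mem_filter, Finset.mem_univ, true_and] at hb
        obtain ⟨k, hk⟩ := hψsurj i b
        refine ⟨k, ?_, hk⟩
        simp only [Finset.mem_filter, Finset.mem_univ, true_and]
        exact (hiff k).mpr (by rw [hk]; exact hb)
end
end
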